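/- Let q be a power of 2 and r ≥ 3. The number of monic irreducible polynomials of degree r over F_q that divide x^{2^r} + x equals (1/r) · Σ_{d | r} μ(d)(2^{r/d} − 1), where μ is the Möbius function. -/

import Mathlib

open Polynomial Function IntermediateField

private lemma sq_iter' {K : Type*} [Monoid K] (x : K) (k : ℕ) :
    (fun y : K => y ^ 2)^[k] x = x ^ 2 ^ k := by
  induction k with
  | zero => simp
  | succ k ih => rw [Function.iterate_succ_apply', ih, ← pow_mul, pow_succ]

private lemma dvd_pow_pow' {F : Type*} [Field F] [CharP F 2] (m k : ℕ) (hk : 0 < k) :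
    (X ^ 2 ^ m + X : F[X]) ∣ X ^ 2 ^ (m * k) + X := by
  induction k with
  | zero => omega
  | succ k ih =>
    rcases Nat.eq_zero_or_pos k with hk0 | hk0
    · subst hk0; simp
    · have ih := ih hk0
      have key : (X ^ 2 ^ (m * (k+1)) + X : F[X])
          = (X ^ 2 ^ (m * k) + X) ^ 2 ^ m + (X ^ 2 ^ m + X) := by
        rw [add_pow_char_pow, ← pow_mul, ← pow_add, add_assoc, ← add_assoc ((X:F[X]) ^ 2 ^ m),
          CharTwo.add_self_eq_zero, zero_add, Nat.mul_add, Nat.mul_one]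
      rw [key]
      exact dvd_add (dvd_pow ih (by positivity)) dvd_rfl

private lemma monicXX' {F : Type*} [Field F] (m : ℕ) (hm : 0 < m) :
    (X ^ 2 ^ m + X : F[X]).Monic ∧ (X ^ 2 ^ m + X : F[X]).natDegree = 2 ^ m := by
  have hdX : (X : F[X]).degree < ((2 ^ m : ℕ) : WithBot ℕ) := by
    rw [degree_X]
    exact_mod_cast Nat.one_lt_two_pow_iff.mpr (by omega)
  constructor
  · exact monic_X_pow_add (by simpa using hdX)
  · have hdeg : (X ^ 2 ^ m + X : F[X]).degree = (2 ^ m : ℕ) := by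
      rw [degree_add_eq_left_of_degree_lt (by rwa [degree_X_pow]), degree_X_pow]
    exact natDegree_eq_of_degree_eq_some hdeg

theorem stmt_7 (n r : ℕ) (hn : 0 < n) (hr : 3 ≤ r) (hrn : Nat.gcd r n = 1)
    (F : Type) [Field F] [Fintype F] (hF : Fintype.card F = 2 ^ n) :
    (Set.ncard {f : Polynomial F | f.Monic ∧ Irreducible f ∧ f.natDegree = r ∧
        f ∣ X ^ 2 ^ r + X} : ℤ) * r
      = ∑ d ∈ r.divisors, (ArithmeticFunction.moebius d : ℤ) * (2 ^ (r / d) - 1) := by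
  classical
  have hr0 : 0 < r := by omega
  -- characteristic 2
  have hch : ringChar F = 2 := by
    have h1 : ringChar F ∣ 2 ^ n := by
      rw [← hF]; exact ringChar.dvd (Nat.cast_card_eq_zero F)
    have hp : (ringChar F).Prime := CharP.char_is_prime F (ringChar F)
    exact (Nat.prime_dvd_prime_iff_eq hp Nat.prime_two).mp (hp.dvd_of_dvd_pow h1)
  haveI hF2 : CharP F 2 := hch ▸ ringChar.charP F
  set P : F[X] := X ^ 2 ^ r + X with hPdef
  have hPmonic : P.Monic := (monicXX' r hr0).1
  have hP0 : P ≠ 0 := hPmonic.ne_zero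
  have hPsep : P.Separable := by
    have hd : derivative P = 1 := by
      rw [hPdef, derivative_add, derivative_X_pow, derivative_X]
      have h2 : ((2 ^ r : ℕ) : F) = 0 := by
        rw [Nat.cast_pow, show ((2:ℕ):F) = 0 from CharP.cast_eq_zero F 2,
          zero_pow (by omega)]
      simp [h2]
    rw [Polynomial.separable_def, hd]; exact isCoprime_one_right
  set K := P.SplittingField with hK
  haveI : CharP K 2 := charP_of_injective_algebraMap (algebraMap F K).injective 2
  haveI : Finite K := inferInstance
  haveI fintK : Fintype K := Fintype.ofFinite K
  haveI : FiniteDimensional F K := inferInstance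
  have hsplits : Splits (P.map (algebraMap F K)) := SplittingField.splits P
  set φ : K → K := fun x => x ^ 2 with hφ
  -- periodicity is power condition
  have key0 : ∀ (x : K) (m : ℕ), IsPeriodicPt φ m x ↔ x ^ 2 ^ m = x := by
    intro x m
    have h : φ^[m] x = x ^ 2 ^ m := sq_iter' x m
    exact ⟨fun hh => by rwa [← h], fun hh => show φ^[m] x = x by rw [h, hh]⟩
  -- root membership
  have hmemroots : ∀ (g : F[X]) (x : K),
      x ∈ (g.map (algebraMap F K)).roots ↔ g ≠ 0 ∧ aeval x g = 0 := by
    intro g x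
    rw [mem_roots', IsRoot, eval_map, ← aeval_def,
      Polynomial.map_ne_zero_iff (algebraMap F K).injective]
  -- counting roots of divisors of P
  have hcount : ∀ g : F[X], g ∣ P →
      (g.map (algebraMap F K)).roots.toFinset.card = g.natDegree := by
    intro g hg
    have hsep : g.Separable := hPsep.of_dvd hg
    have hsp : Splits (g.map (algebraMap F K)) :=
      hsplits.of_dvd (Polynomial.map_ne_zero hP0) (Polynomial.map_dvd _ hg)
    rw [Multiset.toFinset_card_of_nodup (nodup_roots hsep.map), ← hsp.natDegree_eq_card_roots, natDegree_map]
  -- the "level sets" T m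
  have hTroots : ∀ m : ℕ, 0 < m →
      Finset.univ.filter (fun x : K => x ^ 2 ^ m = x)
        = ((X ^ 2 ^ m + X : F[X]).map (algebraMap F K)).roots.toFinset := by
    intro m hm
    ext x
    rw [Finset.mem_filter, Multiset.mem_toFinset, hmemroots]
    have hg0 : (X ^ 2 ^ m + X : F[X]) ≠ 0 := (monicXX' m hm).1.ne_zero
    have hev : aeval x (X ^ 2 ^ m + X : F[X]) = x ^ 2 ^ m + x := by simp
    constructor
    · rintro ⟨-, hx⟩
      refine ⟨hg0, ?_⟩
      rw [hev, hx, CharTwo.add_self_eq_zero]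
    · rintro ⟨-, hx⟩
      rw [hev] at hx
      refine ⟨Finset.mem_univ x, ?_⟩
      have := CharTwo.add_eq_iff_eq_add.mp hx
      rwa [zero_add] at this
  have hTcard : ∀ m : ℕ, 0 < m → m ∣ r →
      (Finset.univ.filter (fun x : K => x ^ 2 ^ m = x)).card = 2 ^ m := by
    intro m hm hmr
    have hdvd : (X ^ 2 ^ m + X : F[X]) ∣ P := by
      have := dvd_pow_pow' (F := F) m (r / m) (Nat.div_pos (Nat.le_of_dvd hr0 hmr) hm)
      rwa [Nat.mul_div_cancel' hmr] at this
    rw [hTroots m hm, hcount _ hdvd, (monicXX' m hm).2]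
  -- the key equivalence: minimal period r ↔ minpoly degree r
  have key3 : ∀ x : K, x ^ 2 ^ r = x →
      (Function.minimalPeriod φ x = r ↔ (minpoly F x).natDegree = r) := by
    intro x hx
    have hint : IsIntegral F x := IsIntegral.of_finite F x
    set d := (minpoly F x).natDegree with hd
    have hdpos : 0 < d := minpoly.natDegree_pos hint
    set m := Function.minimalPeriod φ x with hm
    have hper : IsPeriodicPt φ r x := (key0 x r).mpr hx
    have hmr : m ∣ r := hper.minimalPeriod_dvd
    have hmpos : 0 < m := hper.minimalPeriod_pos hr0
    -- the adjoin field
    have hfinrank : Module.finrank F F⟮x⟯ = d := IntermediateField.adjoin.finrank hint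
    haveI : FiniteDimensional F F⟮x⟯ := inferInstance
    have hcardE : Fintype.card F⟮x⟯ = 2 ^ (n * d) := by
      rw [Module.card_eq_pow_finrank (K := F) (V := F⟮x⟯), hF, hfinrank, ← pow_mul]
    -- (a) m ∣ n * d
    have ha : m ∣ n * d := by
      have hgen : (IntermediateField.AdjoinSimple.gen F x) ^ Fintype.card F⟮x⟯
          = IntermediateField.AdjoinSimple.gen F x := FiniteField.pow_card _
      have : x ^ 2 ^ (n * d) = x := by
        have := congrArg (algebraMap F⟮x⟯ K) hgen
        rwa [map_pow, IntermediateField.AdjoinSimple.algebraMap_gen, hcardE] at this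
      exact Function.IsPeriodicPt.minimalPeriod_dvd ((key0 x (n*d)).mpr this)
    -- (b) d ≤ m
    have hb : d ≤ m := by
      have hxm : x ^ 2 ^ (n * m) = x := by
        have : IsPeriodicPt φ (n * m) x :=
          (Function.isPeriodicPt_iff_minimalPeriod_dvd).mpr ⟨n, by ring⟩
        exact (key0 x (n*m)).mp this
      -- every element of F⟮x⟯ satisfies y ^ 2 ^ (n*m) = y
      have hall : ∀ y : K, y ∈ F⟮x⟯ → y ^ 2 ^ (n * m) = y := by
        intro y hy
        induction hy using IntermediateField.adjoin_induction with
        | mem z hz => rw [Set.mem_singleton_iff.mp hz]; exact hxm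
        | algebraMap c =>
          rw [← map_pow]
          congr 1
          calc c ^ 2 ^ (n * m) = c ^ (2 ^ n) ^ m := by rw [← pow_mul]
            _ = c ^ (Fintype.card F) ^ m := by rw [hF]
            _ = c := FiniteField.pow_card_pow m c
        | add a b ha' hb' iha ihb => rw [add_pow_char_pow, iha, ihb]
        | inv a ha' iha => rw [inv_pow, iha]
        | mul a b ha' hb' iha ihb => rw [mul_pow, iha, ihb]
      -- hence F⟮x⟯ injects into the solution set, of size ≤ 2 ^ (n*m)
      have hle : Fintype.card F⟮x⟯ ≤ 2 ^ (n * m) := by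
        have hmono : (Finset.univ.filter (fun y : K => y ^ 2 ^ (n * m) = y)).card
            ≤ 2 ^ (n * m) := by
          have hnm : 0 < n * m := by positivity
          have := hTroots (n * m) hnm
          rw [this]
          calc ((X ^ 2 ^ (n*m) + X : F[X]).map (algebraMap F K)).roots.toFinset.card
              ≤ Multiset.card ((X ^ 2 ^ (n*m) + X : F[X]).map (algebraMap F K)).roots :=
                Multiset.toFinset_card_le _
            _ ≤ ((X ^ 2 ^ (n*m) + X : F[X]).map (algebraMap F K)).natDegree := card_roots' _
            _ = 2 ^ (n * m) := by rw [natDegree_map]; exact (monicXX' _ hnm).2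
        refine le_trans ?_ hmono
        calc Fintype.card F⟮x⟯ = (Finset.univ : Finset F⟮x⟯).card := Finset.card_univ.symm
          _ ≤ (Finset.univ.filter (fun y : K => y ^ 2 ^ (n * m) = y)).card :=
            Finset.card_le_card_of_injOn (fun y => (y : K))
              (fun y _ => by
                simp only [Finset.mem_coe, Finset.mem_filter, Finset.mem_univ, true_and]
                exact hall (y : K) y.2)
              (fun a _ b _ h => Subtype.ext h)
      rw [hcardE] at hle
      have := (Nat.pow_le_pow_iff_right (by omega : 1 < 2)).mp hle
      exact Nat.le_of_mul_le_mul_left (by omega) hn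
    constructor
    · intro hmeq
      have hrd : r ∣ d := (Nat.Coprime.dvd_of_dvd_mul_left hrn (hmeq ▸ ha))
      exact Nat.le_antisymm (hmeq ▸ hb) (Nat.le_of_dvd hdpos hrd)
    · intro hdeq
      exact Nat.le_antisymm (Nat.le_of_dvd hr0 hmr) (hdeq ▸ hb)
  -- the fiber counts of minimal periods
  set c : ℕ → ℕ := fun dd =>
    (Finset.univ.filter (fun x : K => Function.minimalPeriod φ x = dd)).card with hc
  have hdivsum : ∀ m : ℕ, 0 < m → m ∣ r → (∑ i ∈ m.divisors, c i) = 2 ^ m := by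
    intro m hm hmr
    have hmem : ∀ x ∈ Finset.univ.filter (fun x : K => x ^ 2 ^ m = x),
        Function.minimalPeriod φ x ∈ m.divisors := by
      intro x hxm
      rw [Finset.mem_filter] at hxm
      rw [Nat.mem_divisors]
      exact ⟨Function.IsPeriodicPt.minimalPeriod_dvd ((key0 x m).mpr hxm.2), hm.ne'⟩
    have h1 : (Finset.univ.filter (fun x : K => x ^ 2 ^ m = x)).card
        = ∑ i ∈ m.divisors,
            ((Finset.univ.filter (fun x : K => x ^ 2 ^ m = x)).filter
              (fun x => Function.minimalPeriod φ x = i)).card :=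
      Finset.card_eq_sum_card_fiberwise hmem
    rw [← hTcard m hm hmr, h1]
    apply Finset.sum_congr rfl
    intro i hi
    have hidvd : i ∣ m := Nat.dvd_of_mem_divisors hi
    have hff : (Finset.univ.filter (fun x : K => x ^ 2 ^ m = x)).filter
        (fun x => Function.minimalPeriod φ x = i)
        = Finset.univ.filter (fun x : K => Function.minimalPeriod φ x = i) := by
      ext x
      simp only [Finset.mem_filter, Finset.mem_univ, true_and]
      constructor
      · rintro ⟨-, h2⟩; exact h2
      · intro h2
        refine ⟨(key0 x m).mp ?_, h2⟩
        exact Function.isPeriodicPt_iff_minimalPeriod_dvd.mpr (h2 ▸ hidvd)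
    rw [hff]
  -- Möbius inversion
  have hpremise : ∀ m : ℕ, 0 < m → m ∈ {i : ℕ | i ∣ r} →
      (∑ i ∈ m.divisors, (c i : ℤ)) = (2:ℤ) ^ m := by
    intro m hm hmr
    exact_mod_cast congrArg (Nat.cast : ℕ → ℤ) (hdivsum m hm hmr)
  have hmoeb := (ArithmeticFunction.sum_eq_iff_sum_smul_moebius_eq_on
      {i : ℕ | i ∣ r} (fun a b hab hb => dvd_trans hab hb)
      (f := fun i => (c i : ℤ)) (g := fun m => (2:ℤ) ^ m)).mp hpremise r hr0 (dvd_refl r)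
  have hmoeb2 : (∑ d ∈ r.divisors,
      (ArithmeticFunction.moebius d : ℤ) * 2 ^ (r / d)) = (c r : ℤ) := by
    calc (∑ d ∈ r.divisors, (ArithmeticFunction.moebius d : ℤ) * 2 ^ (r / d))
        = ∑ x ∈ r.divisorsAntidiagonal, (ArithmeticFunction.moebius x.1 : ℤ) * 2 ^ x.2 :=
          (Nat.sum_divisorsAntidiagonal
            (fun a b => (ArithmeticFunction.moebius a : ℤ) * 2 ^ b)).symm
      _ = ∑ x ∈ r.divisorsAntidiagonal,
            (ArithmeticFunction.moebius x.1) • ((2:ℤ) ^ x.2) := by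
          apply Finset.sum_congr rfl; intros
          simp only [Int.cast_id, zsmul_eq_mul]
      _ = c r := hmoeb
  -- the moebius sum vanishes
  have hmu0 : (∑ d ∈ r.divisors, (ArithmeticFunction.moebius d : ℤ)) = 0 := by
    have h2 : (ArithmeticFunction.moebius * ↑ArithmeticFunction.zeta
        : ArithmeticFunction ℤ) r = ∑ i ∈ r.divisors, ArithmeticFunction.moebius i :=
      ArithmeticFunction.coe_mul_zeta_apply
    rw [ArithmeticFunction.moebius_mul_coe_zeta,
      ArithmeticFunction.one_apply_ne (show r ≠ 1 by omega)] at h2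
    simpa [Int.cast_id] using h2.symm
  -- the set of polynomials as an image
  set S : Finset K := Finset.univ.filter
    (fun x : K => x ^ 2 ^ r = x ∧ (minpoly F x).natDegree = r) with hS
  set img : Finset F[X] := S.image (fun x => minpoly F x) with himg
  have hSper : S = Finset.univ.filter (fun x : K => Function.minimalPeriod φ x = r) := by
    ext x
    simp only [hS, Finset.mem_filter, Finset.mem_univ, true_and]
    constructor
    · rintro ⟨h1, h2⟩; exact (key3 x h1).mpr h2
    · intro h
      have hper : IsPeriodicPt φ r x := h ▸ Function.isPeriodicPt_minimalPeriod φ x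
      have h1 : x ^ 2 ^ r = x := (key0 x r).mp hper
      exact ⟨h1, (key3 x h1).mp h⟩
  have himgA : ∀ f : F[X], f ∈ img ↔ (f.Monic ∧ Irreducible f ∧ f.natDegree = r ∧ f ∣ P) := by
    intro f
    constructor
    · intro hf
      obtain ⟨x, hxS, rfl⟩ := Finset.mem_image.mp hf
      rw [hS, Finset.mem_filter] at hxS
      obtain ⟨-, hx1, hx2⟩ := hxS
      have hint : IsIntegral F x := IsIntegral.of_finite F x
      refine ⟨minpoly.monic hint, minpoly.irreducible hint, hx2, minpoly.dvd F x ?_⟩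
      show (aeval x) (X ^ 2 ^ r + X : F[X]) = 0
      rw [show (aeval x) (X ^ 2 ^ r + X : F[X]) = x ^ 2 ^ r + x by simp, hx1,
        CharTwo.add_self_eq_zero]
    · rintro ⟨hmon, hirr, hdeg, hdvd⟩
      have hsp : Splits (f.map (algebraMap F K)) :=
        hsplits.of_dvd (Polynomial.map_ne_zero hP0) (Polynomial.map_dvd _ hdvd)
      have hdeg0 : f.degree ≠ 0 := by
        rw [degree_eq_natDegree hmon.ne_zero, hdeg]
        simpa using (by omega : r ≠ 0)
      obtain ⟨x, hx⟩ := hsp.exists_eval_eq_zero (by rwa [degree_map])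
      have hfx : aeval x f = 0 := by rwa [aeval_def, eval₂_eq_eval_map]
      have hmin : minpoly F x = f := (minpoly.eq_of_irreducible_of_monic hirr hfx hmon).symm
      have hxT : x ^ 2 ^ r = x := by
        have h0 : aeval x P = 0 := by
          obtain ⟨u, hu⟩ := hdvd
          have hcg := congrArg (aeval x) hu
          rw [map_mul, hfx, zero_mul] at hcg
          exact hcg
        have h0' : x ^ 2 ^ r + x = 0 := by
          have h0'' : (aeval x) (X ^ 2 ^ r + X : F[X]) = 0 := h0
          simpa using h0''
        have h3 := CharTwo.add_eq_iff_eq_add.mp h0'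
        rwa [zero_add] at h3
      refine Finset.mem_image.mpr ⟨x, ?_, hmin⟩
      rw [hS, Finset.mem_filter]
      exact ⟨Finset.mem_univ x, hxT, by rw [hmin, hdeg]⟩
  have hfiber : ∀ f ∈ img, (S.filter (fun x => minpoly F x = f)).card = r := by
    intro f hf
    obtain ⟨hmon, hirr, hdeg, hdvd⟩ := (himgA f).mp hf
    have heq : S.filter (fun x => minpoly F x = f)
        = (f.map (algebraMap F K)).roots.toFinset := by
      ext x
      rw [Finset.mem_filter, Multiset.mem_toFinset, hmemroots]
      constructor
      · rintro ⟨hxS, hminx⟩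
        exact ⟨hmon.ne_zero, by rw [← hminx]; exact minpoly.aeval F x⟩
      · rintro ⟨-, hfx⟩
        have hmin : minpoly F x = f := (minpoly.eq_of_irreducible_of_monic hirr hfx hmon).symm
        have hxT : x ^ 2 ^ r = x := by
          have h0 : aeval x P = 0 := by
            obtain ⟨u, hu⟩ := hdvd
            have hcg := congrArg (aeval x) hu
            rw [map_mul, hfx, zero_mul] at hcg
            exact hcg
          have h0' : x ^ 2 ^ r + x = 0 := by
            have h0'' : (aeval x) (X ^ 2 ^ r + X : F[X]) = 0 := h0
            simpa using h0''
          have h3 := CharTwo.add_eq_iff_eq_add.mp h0'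
          rwa [zero_add] at h3
        refine ⟨?_, hmin⟩
        rw [hS, Finset.mem_filter]
        exact ⟨Finset.mem_univ x, hxT, by rw [hmin, hdeg]⟩
    rw [heq, hcount f hdvd, hdeg]
  have hScard : S.card = img.card * r := by
    rw [Finset.card_eq_sum_card_image (fun x => minpoly F x) S,
      Finset.sum_congr rfl (fun f hf => hfiber f hf), Finset.sum_const, smul_eq_mul]
  have hcr : c r = S.card := by rw [hSper]
  have hA : {f : F[X] | f.Monic ∧ Irreducible f ∧ f.natDegree = r ∧ f ∣ P} = ↑img :=
    Set.ext fun f => by rw [Finset.mem_coe, himgA]; rfl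
  rw [hA, Set.ncard_coe_finset]
  have hfinal : (∑ d ∈ r.divisors, (ArithmeticFunction.moebius d : ℤ) * (2 ^ (r / d) - 1))
      = (S.card : ℤ) := by
    have hsplit : (∑ d ∈ r.divisors,
        (ArithmeticFunction.moebius d : ℤ) * (2 ^ (r / d) - 1))
        = (∑ d ∈ r.divisors, (ArithmeticFunction.moebius d : ℤ) * 2 ^ (r / d))
          - (∑ d ∈ r.divisors, (ArithmeticFunction.moebius d : ℤ)) := by
      rw [← Finset.sum_sub_distrib]
      apply Finset.sum_congr rfl
      intros; ring
    rw [hsplit, hmoeb2, hmu0, sub_zero, hcr]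
  rw [hfinal, hScard]
  push_cast
  ring
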